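/- Let S be a non-zero strictly singular bounded operator on an infinite dimensional complex Banach space X such that S² is compact. Then S admits a non-trivial closed hyperinvariant subspace. -/

import Mathlib

open Filter Topology ENNReal NNReal

variable {X : Type*} [NormedAddCommGroup X] [NormedSpace ℂ X]

/-- `S` is strictly singular: its restriction to any infinite dimensional
closed subspace is not an isomorphism onto its image (not bounded below). -/
def StrictlySingular (S : X →L[ℂ] X) : Prop :=
  ∀ Y : Submodule ℂ X, IsClosed (Y : Set X) → ¬ FiniteDimensional ℂ Y →
    ¬ ∃ c : ℝ, 0 < c ∧ ∀ y ∈ Y, c * ‖y‖ ≤ ‖S y‖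

lemma aux_nontrivial' (hinf : ¬ FiniteDimensional ℂ X) : Nontrivial X := by
  by_contra h
  rw [not_nontrivial_iff_subsingleton] at h
  exact hinf Module.Finite.of_finite

lemma aux_not_compact_id' (hinf : ¬ FiniteDimensional ℂ X) :
    ¬ IsCompactOperator (fun x : X => x) := by
  rintro ⟨C, hC, hmem⟩
  obtain ⟨ε, hε, hball⟩ := Metric.mem_nhds_iff.mp hmem
  have hsub : Metric.closedBall (0 : X) (ε / 2) ⊆ C := by
    refine (Metric.closedBall_subset_ball (half_lt_self hε)).trans ?_
    simpa using hball
  exact hinf (FiniteDimensional.of_isCompact_closedBall₀ ℂ (half_pos hε)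
    (hC.of_isClosed_subset Metric.isClosed_closedBall hsub))


lemma aux_exists_eigenvector [CompleteSpace X] [Nontrivial X]
    (K : X →L[ℂ] X) (hKc : IsCompactOperator (⇑K))
    (hr : spectralRadius ℂ K ≠ 0) :
    ∃ (z : ℂ) (v : X), z ≠ 0 ∧ v ≠ 0 ∧ K v = z • v := by
  obtain ⟨z, hz, hzr⟩ := spectrum.exists_nnnorm_eq_spectralRadius (a := K)
  have hz0 : z ≠ 0 := by
    intro h
    rw [h] at hzr
    simp at hzr
    exact hr hzr.symm
  have hznorm : 0 < ‖z‖ := norm_pos_iff.mpr hz0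
  have happrox : ∀ n : ℕ, ∃ x : X, ‖x‖ = 1 ∧ ‖K x - z • x‖ ≤ 3 * ‖z‖ / (n + 1) := by
    intro n
    set μ : ℂ := (1 + ((n : ℝ) + 1)⁻¹ : ℝ) * z with hμ
    have hinvpos : (0:ℝ) < ((n : ℝ) + 1)⁻¹ := by positivity
    have hnormμ : ‖z‖ < ‖μ‖ := by
      rw [hμ, norm_mul, Complex.norm_real, Real.norm_eq_abs,
        _root_.abs_of_pos (by linarith : (0:ℝ) < 1 + ((n : ℝ) + 1)⁻¹)]
      nlinarith
    have hres : μ ∈ resolventSet ℂ K := by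
      apply spectrum.mem_resolventSet_of_spectralRadius_lt
      rw [← hzr]
      exact_mod_cast hnormμ
    obtain ⟨u, hu⟩ := (hres : IsUnit (algebraMap ℂ (X →L[ℂ] X) μ - K))
    set R : X →L[ℂ] X := ↑u⁻¹ with hR
    have hμz : μ - z = ((((n : ℝ) + 1)⁻¹ : ℝ) : ℂ) * z := by
      rw [hμ]; push_cast; ring
    have hμzn : ‖μ - z‖ = ((n : ℝ) + 1)⁻¹ * ‖z‖ := by
      rw [hμz, norm_mul, Complex.norm_real, Real.norm_eq_abs, _root_.abs_of_pos hinvpos]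
    have hμznpos : 0 < ‖μ - z‖ := by rw [hμzn]; positivity
    have hμz0 : μ - z ≠ 0 := norm_pos_iff.mp hμznpos
    have hRlow : 1 / ‖μ - z‖ ≤ ‖R‖ := by
      by_contra hlt
      push_neg at hlt
      have hsm : ‖(algebraMap ℂ (X →L[ℂ] X) (μ - z)) * R‖ < 1 := by
        calc ‖(algebraMap ℂ (X →L[ℂ] X) (μ - z)) * R‖
            ≤ ‖algebraMap ℂ (X →L[ℂ] X) (μ - z)‖ * ‖R‖ := norm_mul_le _ _
          _ ≤ ‖μ - z‖ * ‖R‖ := by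
              gcongr
              exact (norm_algebraMap' (X →L[ℂ] X) (μ - z)).le
          _ < ‖μ - z‖ * (1 / ‖μ - z‖) := by
              exact (mul_lt_mul_iff_right₀ hμznpos).mpr hlt
          _ = 1 := by rw [mul_one_div, div_self (ne_of_gt hμznpos)]
      have hval : ((↑u : X →L[ℂ] X) * ↑(Units.oneSub _ hsm))
          = algebraMap ℂ (X →L[ℂ] X) z - K := by
        rw [Units.val_oneSub, mul_sub, mul_one, ← mul_assoc,
          ← Algebra.commutes (μ - z) (↑u : X →L[ℂ] X), mul_assoc, hR,
          Units.mul_inv, mul_one, hu, map_sub]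
        abel
      have hunit2 : IsUnit (algebraMap ℂ (X →L[ℂ] X) z - K) :=
        hval ▸ (u * Units.oneSub _ hsm).isUnit
      exact (spectrum.mem_iff.mp hz) hunit2
    have hRpos : 0 < ‖R‖ := lt_of_lt_of_le (by positivity) hRlow
    obtain ⟨y, hy1, hy2⟩ := R.exists_lt_apply_of_lt_opNorm (half_lt_self hRpos)
    have hRy : 0 < ‖R y‖ := lt_of_le_of_lt (by positivity) hy2
    set c : ℂ := ((‖R y‖ : ℝ) : ℂ)⁻¹ with hc
    set x : X := c • R y with hx
    have hcnorm : ‖c‖ = ‖R y‖⁻¹ := by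
      rw [hc, norm_inv, Complex.norm_real, Real.norm_eq_abs, _root_.abs_of_pos hRy]
    have hx1 : ‖x‖ = 1 := by
      rw [hx, norm_smul, hcnorm, inv_mul_cancel₀ hRy.ne']
    -- K (R y) = μ • R y - y
    have hKRy : K (R y) = μ • R y - y := by
      have h1 : ((↑u : X →L[ℂ] X) * R) y = y := by rw [hR, Units.mul_inv]; rfl
      rw [ContinuousLinearMap.mul_apply, hu] at h1
      have h2 : (algebraMap ℂ (X →L[ℂ] X) μ) (R y) = μ • R y := by
        rw [Algebra.algebraMap_eq_smul_one]; rfl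
      rw [ContinuousLinearMap.sub_apply, h2] at h1
      linear_combination (norm := module) -h1
    have hkey : K x - z • x = (μ - z) • x - c • y := by
      rw [hx, map_smul, hKRy]
      module
    refine ⟨x, hx1, ?_⟩
    rw [hkey]
    have h5 : 1 ≤ ‖R‖ * ‖μ - z‖ := (div_le_iff₀ hμznpos).mp hRlow
    have hRyinv : ‖R y‖⁻¹ ≤ 2 * ‖μ - z‖ := by
      have h1 : ‖R y‖⁻¹ ≤ (‖R‖ / 2)⁻¹ := inv_anti₀ (by positivity) hy2.le
      have h2 : (‖R‖ / 2)⁻¹ = 2 / ‖R‖ := by rw [inv_div]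
      have h3 : 2 / ‖R‖ ≤ 2 * ‖μ - z‖ := by
        rw [div_le_iff₀ hRpos]
        nlinarith
      linarith
    have hb : ‖(μ - z) • x - c • y‖ ≤ ‖μ - z‖ * ‖x‖ + ‖c‖ * ‖y‖ :=
      (norm_sub_le _ _).trans (add_le_add (norm_smul_le _ _) (norm_smul_le _ _))
    rw [hx1, hcnorm, mul_one] at hb
    have hcy : ‖R y‖⁻¹ * ‖y‖ ≤ ‖R y‖⁻¹ := by
      have := mul_le_mul_of_nonneg_left hy1.le (le_of_lt (inv_pos.mpr hRy))
      simpa using this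
    have hfin : ‖(μ - z) • x - c • y‖ ≤ 3 * ‖μ - z‖ := by linarith
    refine hfin.trans (le_of_eq ?_)
    rw [hμzn]
    field_simp
  -- extract a convergent subsequence of images
  choose x hx1 hx2 using happrox
  have hCc : IsCompact (closure (⇑K '' Metric.closedBall 0 1)) :=
    hKc.isCompact_closure_image_of_bounded Metric.isBounded_closedBall
  have hmem : ∀ n, K (x n) ∈ closure (⇑K '' Metric.closedBall 0 1) := fun n =>
    subset_closure ⟨x n, by simp [Metric.mem_closedBall, dist_zero_right, (hx1 n).le], rfl⟩
  obtain ⟨y0, -, φ, hφ, hconv⟩ := hCc.tendsto_subseq hmem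
  have herr : Tendsto (fun n => K (x (φ n)) - z • x (φ n)) atTop (𝓝 0) := by
    apply squeeze_zero_norm (a := fun n : ℕ => 3 * ‖z‖ / ((n:ℝ) + 1))
    · intro n
      refine (hx2 (φ n)).trans ?_
      have hn' : (n : ℝ) ≤ (φ n : ℝ) := by exact_mod_cast hφ.le_apply
      apply div_le_div_of_nonneg_left (by positivity) (by positivity) (by linarith)
    · apply Tendsto.div_atTop (tendsto_const_nhds (x := 3 * ‖z‖))
      exact tendsto_atTop_add_const_right _ 1 tendsto_natCast_atTop_atTop
  have hzx : Tendsto (fun n => z • x (φ n)) atTop (𝓝 y0) := by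
    have h := hconv.sub herr
    simpa using h
  have hxconv : Tendsto (fun n => x (φ n)) atTop (𝓝 (z⁻¹ • y0)) := by
    have h := hzx.const_smul z⁻¹
    simpa [smul_smul, inv_mul_cancel₀ hz0] using h
  set v := z⁻¹ • y0 with hv
  have hv1 : ‖v‖ = 1 := by
    have h1 : Tendsto (fun n => ‖x (φ n)‖) atTop (𝓝 ‖v‖) := hxconv.norm
    have h2 : Tendsto (fun n => ‖x (φ n)‖) atTop (𝓝 1) := by
      simpa [hx1] using (tendsto_const_nhds : Tendsto (fun _ : ℕ => (1:ℝ)) atTop (𝓝 1))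
    exact tendsto_nhds_unique h1 h2
  refine ⟨z, v, hz0, fun h => by rw [h] at hv1; simp at hv1, ?_⟩
  have hKv : Tendsto (fun n => K (x (φ n))) atTop (𝓝 (K v)) :=
    (K.continuous.tendsto v).comp hxconv
  have e1 : K v = y0 := tendsto_nhds_unique hKv hconv
  have e2 : y0 = z • v := tendsto_nhds_unique hzx (hxconv.const_smul z)
  rw [e1, e2]

-- eigenspace of K at nonzero eigenvalue is a valid hyperinvariant subspace
lemma aux_eigenspace (hinf : ¬ FiniteDimensional ℂ X)
    (S K : X →L[ℂ] X)
    (hcommK : ∀ T : X →L[ℂ] X, T.comp S = S.comp T → ∀ x, T (K x) = K (T x))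
    (hKc : IsCompactOperator (⇑K)) {z : ℂ} {v : X}
    (hz0 : z ≠ 0) (hv0 : v ≠ 0) (hKv : K v = z • v) :
    ∃ Y : Submodule ℂ X, IsClosed (Y : Set X) ∧ Y ≠ ⊥ ∧ Y ≠ ⊤ ∧
      ∀ T : X →L[ℂ] X, T.comp S = S.comp T → ∀ x ∈ Y, T x ∈ Y := by
  refine ⟨LinearMap.ker ((K - z • (1 : X →L[ℂ] X)) : X →ₗ[ℂ] X), ?_, ?_, ?_, ?_⟩
  · exact ContinuousLinearMap.isClosed_ker (K - z • (1 : X →L[ℂ] X))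
  · rw [Submodule.ne_bot_iff]
    refine ⟨v, ?_, hv0⟩
    rw [LinearMap.mem_ker]
    show (K - z • (1 : X →L[ℂ] X)) v = 0
    simp [ContinuousLinearMap.sub_apply, hKv]
  · intro htop
    apply aux_not_compact_id' hinf
    have hfun : (fun x : X => x) = fun x => z⁻¹ • K x := by
      funext w
      have hw : w ∈ LinearMap.ker ((K - z • (1 : X →L[ℂ] X)) : X →ₗ[ℂ] X) := htop ▸ Submodule.mem_top
      rw [LinearMap.mem_ker] at hw
      have hw' : K w - z • w = 0 := by
        simpa [ContinuousLinearMap.sub_apply] using hw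
      have : K w = z • w := by linear_combination (norm := module) hw'
      rw [this, smul_smul, inv_mul_cancel₀ hz0, one_smul]
    rw [hfun]
    exact hKc.smul z⁻¹
  · intro T hT x hx
    rw [LinearMap.mem_ker] at hx ⊢
    have hx' : K x = z • x := by
      have : K x - z • x = 0 := by
        simpa [ContinuousLinearMap.sub_apply] using hx
      linear_combination (norm := module) this
    show (K - z • (1 : X →L[ℂ] X)) (T x) = 0
    have : K (T x) = z • T x := by
      rw [← hcommK T hT x, hx', map_smul]
    simp [ContinuousLinearMap.sub_apply, this]


lemma aux_hilden [CompleteSpace X] [Nontrivial X]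
    (S K : X →L[ℂ] X) (hK0 : K ≠ 0)
    (hcommK' : ∀ T : X →L[ℂ] X, T.comp S = S.comp T → T.comp K = K.comp T)
    (hKc : IsCompactOperator (⇑K))
    (hr : spectralRadius ℂ K = 0) :
    ∃ Y : Submodule ℂ X, IsClosed (Y : Set X) ∧ Y ≠ ⊥ ∧ Y ≠ ⊤ ∧
      ∀ T : X →L[ℂ] X, T.comp S = S.comp T → ∀ x ∈ Y, T x ∈ Y := by
  by_contra hno
  -- Step 1: density of commutant orbits
  have hdense : ∀ y : X, y ≠ 0 → ∀ w : X, ∀ ε : ℝ, 0 < ε →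
      ∃ T : X →L[ℂ] X, T.comp S = S.comp T ∧ ‖T y - w‖ < ε := by
    intro y hy w ε hε
    set O : Submodule ℂ X :=
      { carrier := {u | ∃ T : X →L[ℂ] X, T.comp S = S.comp T ∧ T y = u}
        add_mem' := by
          rintro a b ⟨T, hT, rfl⟩ ⟨T', hT', rfl⟩
          exact ⟨T + T', by rw [ContinuousLinearMap.add_comp, ContinuousLinearMap.comp_add,
            hT, hT'], rfl⟩
        zero_mem' := ⟨0, by simp, by simp⟩
        smul_mem' := by
          rintro c a ⟨T, hT, rfl⟩
          exact ⟨c • T, by rw [ContinuousLinearMap.smul_comp, ContinuousLinearMap.comp_smul,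
            hT], rfl⟩ } with hO
    set Y := O.topologicalClosure with hY
    have hYcoe : (Y : Set X) = closure (O : Set X) := rfl
    have hYclosed : IsClosed (Y : Set X) := O.isClosed_topologicalClosure
    have hYbot : Y ≠ ⊥ := by
      rw [Submodule.ne_bot_iff]
      exact ⟨y, O.le_topologicalClosure ⟨1, by simp [ContinuousLinearMap.one_def], by simp⟩, hy⟩
    have hYinv : ∀ T : X →L[ℂ] X, T.comp S = S.comp T → ∀ x ∈ Y, T x ∈ Y := by
      intro T hT x hx
      have hmaps : Set.MapsTo ⇑T (O : Set X) (O : Set X) := by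
        rintro a ⟨T', hT', rfl⟩
        refine ⟨T.comp T', ?_, rfl⟩
        rw [ContinuousLinearMap.comp_assoc, hT', ← ContinuousLinearMap.comp_assoc, hT,
          ContinuousLinearMap.comp_assoc]
      have := (hmaps.closure T.continuous) (by rwa [← SetLike.mem_coe, hYcoe] at hx)
      rwa [← SetLike.mem_coe, hYcoe]
    have hYtop : Y = ⊤ := by
      by_contra hne
      exact hno ⟨Y, hYclosed, hYbot, hne, hYinv⟩
    have hw : w ∈ closure (O : Set X) := by
      rw [← hYcoe]
      exact hYtop ▸ Submodule.mem_top
    obtain ⟨b, hbO, hbd⟩ := Metric.mem_closure_iff.mp hw ε hε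
    obtain ⟨T, hTc, rfl⟩ := hbO
    exact ⟨T, hTc, by rwa [← dist_eq_norm, dist_comm]⟩
  -- Step 2: choose a good center x0
  obtain ⟨x1, hx1⟩ : ∃ x, K x ≠ 0 := by
    by_contra h
    push_neg at h
    exact hK0 (ContinuousLinearMap.ext h)
  have hx1n : 0 < ‖x1‖ := by
    rw [norm_pos_iff]
    intro h
    exact hx1 (by rw [h, map_zero])
  have hKx1 : 0 < ‖K x1‖ := norm_pos_iff.mpr hx1
  set t : ℝ := max ((‖K‖ + 2) / ‖K x1‖) (3 / ‖x1‖) with ht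
  have htpos : 0 < t := lt_max_of_lt_right (by positivity)
  set x0 : X := (t : ℂ) • x1 with hx0
  have hx0norm : ‖x0‖ = t * ‖x1‖ := by
    rw [hx0, norm_smul, Complex.norm_real, Real.norm_eq_abs, _root_.abs_of_pos htpos]
  have h3x0 : 3 ≤ ‖x0‖ := by
    rw [hx0norm]
    rw [← div_le_iff₀ hx1n]
    exact le_max_right _ _
  have hKx0 : ‖K‖ + 2 ≤ ‖K x0‖ := by
    have : K x0 = (t : ℂ) • K x1 := by rw [hx0, map_smul]
    rw [this, norm_smul, Complex.norm_real, Real.norm_eq_abs, _root_.abs_of_pos htpos,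
      ← div_le_iff₀ hKx1]
    exact le_max_left _ _
  have hB : ∀ x ∈ Metric.closedBall x0 1, 2 ≤ ‖K x‖ := by
    intro x hx
    have h1 : ‖K x0 - K x‖ ≤ ‖K‖ := by
      rw [← map_sub]
      calc ‖K (x0 - x)‖ ≤ ‖K‖ * ‖x0 - x‖ := K.le_opNorm _
        _ ≤ ‖K‖ * 1 := by
            gcongr
            rw [← dist_eq_norm, dist_comm]
            exact Metric.mem_closedBall.mp hx
        _ = ‖K‖ := mul_one _
    have h2 : ‖K x0‖ - ‖K x‖ ≤ ‖K x0 - K x‖ := norm_sub_norm_le _ _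
    linarith
  set C : Set X := closure (⇑K '' Metric.closedBall x0 1) with hC
  have hCc : IsCompact C := hKc.isCompact_closure_image_of_bounded Metric.isBounded_closedBall
  have hC1 : ∀ y ∈ C, 2 ≤ ‖y‖ := by
    intro y hy
    have hsub : C ⊆ {y : X | 2 ≤ ‖y‖} := by
      apply closure_minimal ?_ (isClosed_le continuous_const continuous_norm)
      rintro _ ⟨x, hx, rfl⟩
      exact hB x hx
    exact hsub hy
  -- Step 3: finite subcover
  set U : {T : X →L[ℂ] X // T.comp S = S.comp T} → Set X :=
    fun i => ⇑i.1 ⁻¹' Metric.ball x0 1 with hU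
  have hUo : ∀ i, IsOpen (U i) := fun i => Metric.isOpen_ball.preimage i.1.continuous
  have hcov : C ⊆ ⋃ i, U i := by
    intro y hy
    have hy0 : y ≠ 0 := by
      intro h
      have := hC1 y hy
      rw [h, norm_zero] at this
      linarith
    obtain ⟨T, hTc, hTy⟩ := hdense y hy0 x0 1 one_pos
    exact Set.mem_iUnion.mpr ⟨⟨T, hTc⟩, by simpa [hU, Metric.mem_ball, dist_eq_norm] using hTy⟩
  obtain ⟨s, hs⟩ := hCc.elim_finite_subcover U hUo hcov
  set M : NNReal := (s.sup fun i => ‖i.1‖₊) ⊔ 1 with hM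
  have hM1 : (1 : ℝ) ≤ (M : ℝ) := by
    have : (1 : NNReal) ≤ M := hM ▸ le_sup_right
    exact_mod_cast this
  have hMpos : (0 : ℝ) < (M : ℝ) := lt_of_lt_of_le one_pos hM1
  have hMi : ∀ i ∈ s, ‖i.1‖ ≤ (M : ℝ) := by
    intro i hi
    have : ‖i.1‖₊ ≤ M := hM ▸ le_trans (Finset.le_sup (f := fun i => ‖i.1‖₊) hi) le_sup_left
    exact_mod_cast this
  -- Step 4: one step of the iteration
  have step : ∀ z ∈ Metric.closedBall x0 1, ∃ T : X →L[ℂ] X,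
      T.comp S = S.comp T ∧ ‖T‖ ≤ (M : ℝ) ∧ T (K z) ∈ Metric.closedBall x0 1 := by
    intro z hz
    have hKz : K z ∈ C := subset_closure ⟨z, hz, rfl⟩
    obtain ⟨i, hi, hmemU⟩ := Set.mem_iUnion₂.mp (hs hKz)
    exact ⟨i.1, i.2, hMi i hi, Metric.ball_subset_closedBall hmemU⟩
  -- Step 5: iterate
  have key : ∀ k : ℕ, ∃ Q : X →L[ℂ] X, Q.comp K = K.comp Q ∧ ‖Q‖ ≤ (M : ℝ) ^ k ∧
      Q ((K ^ k) x0) ∈ Metric.closedBall x0 1 := by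
    intro k
    induction k with
    | zero =>
      refine ⟨1, by simp [ContinuousLinearMap.one_def], ?_, ?_⟩
      · simp
      · simpa using Metric.mem_closedBall_self zero_le_one
    | succ k ih =>
      obtain ⟨Q, hQK, hQn, hQm⟩ := ih
      obtain ⟨T, hTS, hTn, hTm⟩ := step _ hQm
      have hTK := hcommK' T hTS
      refine ⟨T.comp Q, ?_, ?_, ?_⟩
      · rw [ContinuousLinearMap.comp_assoc, hQK, ← ContinuousLinearMap.comp_assoc, hTK,
          ContinuousLinearMap.comp_assoc]
      · calc ‖T.comp Q‖ ≤ ‖T‖ * ‖Q‖ := ContinuousLinearMap.opNorm_comp_le _ _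
          _ ≤ (M : ℝ) * (M : ℝ) ^ k := by
              apply mul_le_mul hTn hQn (norm_nonneg _) (le_of_lt hMpos)
          _ = (M : ℝ) ^ (k + 1) := by rw [pow_succ]; ring
      · have hpow : (K ^ (k + 1)) x0 = K ((K ^ k) x0) := by
          rw [pow_succ']
          rfl
        rw [ContinuousLinearMap.comp_apply, hpow]
        have hq : Q (K ((K ^ k) x0)) = K (Q ((K ^ k) x0)) := by
          have := DFunLike.congr_fun hQK ((K ^ k) x0)
          simpa using this
        rw [hq]
        exact hTm
  -- Step 6: lower bound
  have hlow : ∀ k : ℕ, 1 ≤ (M : ℝ) ^ k * ‖K ^ k‖ * ‖x0‖ := by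
    intro k
    obtain ⟨Q, -, hQn, hQm⟩ := key k
    set v := (K ^ k) x0 with hv
    have h1 : ‖x0‖ - 1 ≤ ‖Q v‖ := by
      have hd : ‖Q v - x0‖ ≤ 1 := by
        rw [← dist_eq_norm]
        exact Metric.mem_closedBall.mp hQm
      have := norm_sub_norm_le x0 (Q v)
      have hrev : ‖x0 - Q v‖ = ‖Q v - x0‖ := norm_sub_rev _ _
      linarith
    have h2 : ‖Q v‖ ≤ (M : ℝ) ^ k * ‖K ^ k‖ * ‖x0‖ := by
      calc ‖Q v‖ ≤ ‖Q‖ * ‖v‖ := Q.le_opNorm _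
        _ ≤ (M : ℝ) ^ k * (‖K ^ k‖ * ‖x0‖) := by
            apply mul_le_mul hQn ((K ^ k).le_opNorm x0) (norm_nonneg _) (by positivity)
        _ = (M : ℝ) ^ k * ‖K ^ k‖ * ‖x0‖ := by ring
    linarith
  -- Step 7: Gelfand's formula gives a contradiction
  have hg := spectrum.pow_nnnorm_pow_one_div_tendsto_nhds_spectralRadius K
  rw [hr] at hg
  set c : NNReal := ((2 : NNReal) * M)⁻¹ with hc
  have hcpos : (0 : ℝ≥0∞) < (c : ℝ≥0∞) := by
    rw [ENNReal.coe_pos, hc]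
    apply inv_pos.mpr
    have : (0 : ℝ) < 2 * (M : ℝ) := by linarith
    exact_mod_cast this
  have hev1 : ∀ᶠ n : ℕ in atTop, (‖K ^ n‖₊ : ℝ≥0∞) ^ (1 / (n : ℝ)) < (c : ℝ≥0∞) :=
    hg.eventually_lt_const hcpos
  have hev2 : ∀ᶠ n : ℕ in atTop, 1 ≤ n := eventually_ge_atTop 1
  have hev3 : ∀ᶠ n : ℕ in atTop, ‖x0‖ < 2 ^ n :=
    (tendsto_pow_atTop_atTop_of_one_lt (one_lt_two : (1:ℝ) < 2)).eventually_gt_atTop ‖x0‖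
  obtain ⟨k, hk1, hk2, hk3⟩ := (hev1.and (hev2.and hev3)).exists
  have hkne : (k : ℝ) ≠ 0 := by
    have : (1 : ℝ) ≤ (k : ℝ) := by exact_mod_cast hk2
    linarith
  have e1 : ((‖K ^ k‖₊ : ℝ≥0∞) ^ (1 / (k : ℝ))) ^ (k : ℕ) = (‖K ^ k‖₊ : ℝ≥0∞) := by
    rw [← ENNReal.rpow_natCast, ← ENNReal.rpow_mul, one_div, inv_mul_cancel₀ hkne,
      ENNReal.rpow_one]
  have hle : (‖K ^ k‖₊ : ℝ≥0∞) ≤ ((c ^ k : NNReal) : ℝ≥0∞) := by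
    rw [← e1, ENNReal.coe_pow]
    exact pow_le_pow_left₀ zero_le hk1.le k
  have hleR : ‖K ^ k‖ ≤ ((c : ℝ)) ^ k := by
    have h := ENNReal.coe_le_coe.mp hle
    have := NNReal.coe_le_coe.mpr h
    rw [NNReal.coe_pow] at this
    exact_mod_cast this
  have hcR : (c : ℝ) = (2 * (M : ℝ))⁻¹ := by
    rw [hc]
    push_cast
    norm_num
  have hmain := hlow k
  have hMK : (M : ℝ) ^ k * ‖K ^ k‖ ≤ (1 / 2) ^ k := by
    calc (M : ℝ) ^ k * ‖K ^ k‖ ≤ (M : ℝ) ^ k * ((c : ℝ)) ^ k := by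
          apply mul_le_mul_of_nonneg_left hleR (by positivity)
      _ = (1 / 2) ^ k := by
          rw [← mul_pow, hcR]
          congr 1
          field_simp
  have hfin : (M : ℝ) ^ k * ‖K ^ k‖ * ‖x0‖ < 1 := by
    calc (M : ℝ) ^ k * ‖K ^ k‖ * ‖x0‖ ≤ (1 / 2) ^ k * ‖x0‖ := by
          apply mul_le_mul_of_nonneg_right hMK (norm_nonneg _)
      _ < (1 / 2) ^ k * 2 ^ k := by
          apply mul_lt_mul_of_pos_left hk3 (by positivity)
      _ = 1 := by
          rw [← mul_pow]
          norm_num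
  linarith

/-- A non-zero strictly singular operator on an infinite dimensional complex
Banach space whose square is compact admits a non-trivial closed
hyperinvariant subspace. -/
theorem strictlySingular_hyperinvariant
    [CompleteSpace X] (hinf : ¬ FiniteDimensional ℂ X)
    (S : X →L[ℂ] X) (hS : S ≠ 0) (hss : StrictlySingular S)
    (hcomp : IsCompactOperator fun x => S (S x)) :
    ∃ Y : Submodule ℂ X, IsClosed (Y : Set X) ∧ Y ≠ ⊥ ∧ Y ≠ ⊤ ∧
      ∀ T : X →L[ℂ] X, T.comp S = S.comp T → ∀ x ∈ Y, T x ∈ Y := by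
  haveI : Nontrivial X := aux_nontrivial' hinf
  set K : X →L[ℂ] X := S.comp S with hKdef
  have hKc : IsCompactOperator (⇑K) := hcomp
  have hcommK : ∀ T : X →L[ℂ] X, T.comp S = S.comp T → ∀ x, T (K x) = K (T x) := by
    intro T hT x
    have h1 : ∀ w, T (S w) = S (T w) := fun w => DFunLike.congr_fun hT w
    show T (S (S x)) = S (S (T x))
    rw [h1, h1]
  by_cases hK0 : K = 0
  · refine ⟨LinearMap.ker (S : X →ₗ[ℂ] X), ContinuousLinearMap.isClosed_ker _, ?_, ?_, ?_⟩
    · rw [Submodule.ne_bot_iff]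
      obtain ⟨x, hx⟩ : ∃ x, S x ≠ 0 := by
        by_contra h
        push_neg at h
        exact hS (ContinuousLinearMap.ext h)
      refine ⟨S x, ?_, hx⟩
      rw [LinearMap.mem_ker]
      exact DFunLike.congr_fun hK0 x
    · intro htop
      apply hS
      ext x
      have : x ∈ LinearMap.ker (S : X →ₗ[ℂ] X) := htop ▸ Submodule.mem_top
      simpa using this
    · intro T hT x hx
      rw [LinearMap.mem_ker, ContinuousLinearMap.coe_coe] at hx ⊢
      have := DFunLike.congr_fun hT x
      simp only [ContinuousLinearMap.comp_apply] at this
      rw [← this, hx, map_zero]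
  · rcases eq_or_ne (spectralRadius ℂ K) 0 with hr | hr
    · exact aux_hilden S K hK0
        (fun T hT => ContinuousLinearMap.ext fun x => hcommK T hT x) hKc hr
    · obtain ⟨z, v, hz0, hv0, hKv⟩ := aux_exists_eigenvector K hKc hr
      exact aux_eigenspace hinf S K hcommK hKc hz0 hv0 hKv
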